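/- arXiv:2508.03059 — 7 statements merged into one kernel-verified Lean document; each statement's English description precedes it below -/
import Mathlib

section
/- For every measurable w : Ω → (0,∞), the balancing loss satisfies l(w) = ∫ w^{-1} p dμ + ∫ w q dμ ≥ 2 ∫ √(p·q) dμ. Moreover, if p and q are μ-a.e. strictly positive, then equality holds if and only if w = √(p/q) μ-a.e.; in particular w* = √(p/q) is the (a.e.-unique) minimizer of the balancing loss. -/
open MeasureTheory
open scoped ENNReal

lemma amgm (a b : ℝ) (ha : 0 ≤ a) (hb : 0 ≤ b) : 2 * Real.sqrt (a*b) ≤ a + b := by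
  nlinarith [sq_nonneg (Real.sqrt a - Real.sqrt b), Real.sq_sqrt ha, Real.sq_sqrt hb,
    Real.sqrt_mul ha b, Real.sqrt_nonneg a, Real.sqrt_nonneg b]

lemma amgm_eq (a b : ℝ) (ha : 0 ≤ a) (hb : 0 ≤ b) (h : a + b = 2 * Real.sqrt (a*b)) : a = b := by
  have h1 := Real.sq_sqrt ha
  have h2 := Real.sq_sqrt hb
  have h3 : Real.sqrt (a*b) = Real.sqrt a * Real.sqrt b := Real.sqrt_mul ha b
  have h4 : (Real.sqrt a - Real.sqrt b)^2 = 0 := by nlinarith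
  have h5 : Real.sqrt a = Real.sqrt b := by
    have := pow_eq_zero_iff (n := 2) (by norm_num) |>.mp h4
    linarith [sub_eq_zero.mp this]
  nlinarith

lemma sqrt_div_mul {p q : ℝ} (hp : 0 < p) (hq : 0 < q) :
    Real.sqrt (p/q) * q = Real.sqrt (p*q) := by
  have h : Real.sqrt (p/q) * q = Real.sqrt (p/q * q^2) := by
    rw [Real.sqrt_mul (div_nonneg hp.le hq.le), Real.sqrt_sq hq.le]
  rw [h]; congr 1; field_simp

lemma sqrt_div_inv_mul {p q : ℝ} (hp : 0 < p) (hq : 0 < q) :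
    (Real.sqrt (p/q))⁻¹ * p = Real.sqrt (p*q) := by
  rw [← Real.sqrt_inv, inv_div]
  have h : Real.sqrt (q/p) * p = Real.sqrt (q/p * p^2) := by
    rw [Real.sqrt_mul (div_nonneg hq.le hp.le), Real.sqrt_sq hp.le]
  rw [h]; congr 1; field_simp

lemma eq_side {Ω : Type*} [MeasurableSpace Ω] (μ : Measure Ω) (p q w : Ω → ℝ)
    (hp : ∀ᵐ x ∂μ, 0 < p x) (hq : ∀ᵐ x ∂μ, 0 < q x)
    (hw : ∀ᵐ x ∂μ, w x = Real.sqrt (p x / q x)) :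
    (∫⁻ x, ENNReal.ofReal ((w x)⁻¹ * p x) ∂μ) + ∫⁻ x, ENNReal.ofReal (w x * q x) ∂μ
      = 2 * ∫⁻ x, ENNReal.ofReal (Real.sqrt (p x * q x)) ∂μ := by
  have h1 : (fun x => ENNReal.ofReal ((w x)⁻¹ * p x))
      =ᵐ[μ] fun x => ENNReal.ofReal (Real.sqrt (p x * q x)) := by
    filter_upwards [hp, hq, hw] with x hpx hqx hwx
    rw [hwx, sqrt_div_inv_mul hpx hqx]
  have h2 : (fun x => ENNReal.ofReal (w x * q x))
      =ᵐ[μ] fun x => ENNReal.ofReal (Real.sqrt (p x * q x)) := by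
    filter_upwards [hp, hq, hw] with x hpx hqx hwx
    rw [hwx, sqrt_div_mul hpx hqx]
  rw [lintegral_congr_ae h1, lintegral_congr_ae h2, two_mul]

/-- For every measurable `w : Ω → (0,∞)`, the balancing loss satisfies
`l(w) = ∫ w⁻¹ p dμ + ∫ w q dμ ≥ 2 ∫ √(p·q) dμ`. Moreover, if `p` and `q` are `μ`-a.e.
strictly positive, then equality holds if and only if `w = √(p/q)` `μ`-a.e.; in particular
`w* = √(p/q)` is the (a.e.-unique) minimizer of the balancing loss. -/
theorem stmt_4 {Ω : Type*} [MeasurableSpace Ω] (μ : Measure Ω) [SigmaFinite μ]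
    (p q : Ω → ℝ) (hpm : Measurable p) (hqm : Measurable q)
    (hp0 : ∀ x, 0 ≤ p x) (hq0 : ∀ x, 0 ≤ q x)
    (hp1 : ∫⁻ x, ENNReal.ofReal (p x) ∂μ = 1)
    (hq1 : ∫⁻ x, ENNReal.ofReal (q x) ∂μ = 1)
    (w : Ω → ℝ) (hwm : Measurable w) (hw : ∀ x, 0 < w x) :
    2 * (∫⁻ x, ENNReal.ofReal (Real.sqrt (p x * q x)) ∂μ)
      ≤ (∫⁻ x, ENNReal.ofReal ((w x)⁻¹ * p x) ∂μ) + ∫⁻ x, ENNReal.ofReal (w x * q x) ∂μ ∧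
    ((∀ᵐ x ∂μ, 0 < p x) → (∀ᵐ x ∂μ, 0 < q x) →
      (((∫⁻ x, ENNReal.ofReal ((w x)⁻¹ * p x) ∂μ) + ∫⁻ x, ENNReal.ofReal (w x * q x) ∂μ
          = 2 * ∫⁻ x, ENNReal.ofReal (Real.sqrt (p x * q x)) ∂μ)
        ↔ (∀ᵐ x ∂μ, w x = Real.sqrt (p x / q x))) ∧
      (∫⁻ x, ENNReal.ofReal ((Real.sqrt (p x / q x))⁻¹ * p x) ∂μ)
          + (∫⁻ x, ENNReal.ofReal (Real.sqrt (p x / q x) * q x) ∂μ)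
        = 2 * ∫⁻ x, ENNReal.ofReal (Real.sqrt (p x * q x)) ∂μ) := by
  have ha0 : ∀ x, 0 ≤ (w x)⁻¹ * p x := fun x => mul_nonneg (inv_nonneg.mpr (hw x).le) (hp0 x)
  have hb0 : ∀ x, 0 ≤ w x * q x := fun x => mul_nonneg (hw x).le (hq0 x)
  have hab : ∀ x, ((w x)⁻¹ * p x) * (w x * q x) = p x * q x := by
    intro x
    have hne := (hw x).ne'
    field_simp
  have hsm : Measurable fun x => Real.sqrt (p x * q x) := (hpm.mul hqm).sqrt
  have hma : Measurable fun x => ENNReal.ofReal ((w x)⁻¹ * p x) :=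
    (hwm.inv.mul hpm).ennreal_ofReal
  have hmb : Measurable fun x => ENNReal.ofReal (w x * q x) :=
    (hwm.mul hqm).ennreal_ofReal
  -- pointwise AM-GM
  have hpt : ∀ x, ENNReal.ofReal (2 * Real.sqrt (p x * q x))
      ≤ ENNReal.ofReal ((w x)⁻¹ * p x) + ENNReal.ofReal (w x * q x) := by
    intro x
    rw [← ENNReal.ofReal_add (ha0 x) (hb0 x)]
    apply ENNReal.ofReal_le_ofReal
    have := amgm _ _ (ha0 x) (hb0 x)
    rwa [hab x] at this
  have h2I : ∫⁻ x, ENNReal.ofReal (2 * Real.sqrt (p x * q x)) ∂μ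
      = 2 * ∫⁻ x, ENNReal.ofReal (Real.sqrt (p x * q x)) ∂μ := by
    simp_rw [ENNReal.ofReal_mul (by norm_num : (0:ℝ) ≤ 2)]
    rw [lintegral_const_mul _ hsm.ennreal_ofReal]
    norm_num
  have hineq : 2 * ∫⁻ x, ENNReal.ofReal (Real.sqrt (p x * q x)) ∂μ
      ≤ (∫⁻ x, ENNReal.ofReal ((w x)⁻¹ * p x) ∂μ) + ∫⁻ x, ENNReal.ofReal (w x * q x) ∂μ := by
    rw [← h2I, ← lintegral_add_left hma]
    exact lintegral_mono hpt
  -- finiteness: ∫ √(pq) ≤ 1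
  have hfin : (∫⁻ x, ENNReal.ofReal (Real.sqrt (p x * q x)) ∂μ) ≤ 1 := by
    have h1 : ∀ x, ENNReal.ofReal (2 * Real.sqrt (p x * q x))
        ≤ ENNReal.ofReal (p x) + ENNReal.ofReal (q x) := by
      intro x
      rw [← ENNReal.ofReal_add (hp0 x) (hq0 x)]
      exact ENNReal.ofReal_le_ofReal (amgm _ _ (hp0 x) (hq0 x))
    have h2 : 2 * (∫⁻ x, ENNReal.ofReal (Real.sqrt (p x * q x)) ∂μ) ≤ 2 * 1 := by
      rw [← h2I]
      calc ∫⁻ x, ENNReal.ofReal (2 * Real.sqrt (p x * q x)) ∂μ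
          ≤ ∫⁻ x, (ENNReal.ofReal (p x) + ENNReal.ofReal (q x)) ∂μ := lintegral_mono h1
        _ = 1 + 1 := by rw [lintegral_add_left hpm.ennreal_ofReal, hp1, hq1]
        _ = 2 * 1 := by norm_num
    exact (ENNReal.mul_le_mul_iff_right two_ne_zero (by norm_num)).mp h2
  refine ⟨hineq, fun hpa hqa => ⟨⟨fun h => ?_, fun h => eq_side μ p q w hpa hqa h⟩,
    eq_side μ p q (fun x => Real.sqrt (p x / q x)) hpa hqa (ae_of_all _ fun x => rfl)⟩⟩
  -- forward direction: equality implies w = √(p/q) a.e.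
  have hmg : Measurable fun x => ENNReal.ofReal (2 * Real.sqrt (p x * q x)) :=
    (measurable_const.mul hsm).ennreal_ofReal
  have hfI : (∫⁻ x, ENNReal.ofReal (2 * Real.sqrt (p x * q x)) ∂μ) ≠ ⊤ := by
    rw [h2I]
    exact ENNReal.mul_ne_top (by norm_num) (lt_of_le_of_lt hfin ENNReal.one_lt_top).ne
  have hsub : ∫⁻ x, (ENNReal.ofReal ((w x)⁻¹ * p x) + ENNReal.ofReal (w x * q x))
        - ENNReal.ofReal (2 * Real.sqrt (p x * q x)) ∂μ
      = ((∫⁻ x, ENNReal.ofReal ((w x)⁻¹ * p x) ∂μ) + ∫⁻ x, ENNReal.ofReal (w x * q x) ∂μ)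
        - ∫⁻ x, ENNReal.ofReal (2 * Real.sqrt (p x * q x)) ∂μ := by
    rw [← lintegral_add_left hma]
    exact lintegral_sub hmg hfI (Filter.Eventually.of_forall hpt)
  have hzero : ∫⁻ x, (ENNReal.ofReal ((w x)⁻¹ * p x) + ENNReal.ofReal (w x * q x))
        - ENNReal.ofReal (2 * Real.sqrt (p x * q x)) ∂μ = 0 := by
    rw [hsub, h2I, h, tsub_self]
  have hz := (lintegral_eq_zero_iff ((hma.add hmb).sub hmg)).mp hzero
  filter_upwards [hz, hpa, hqa] with x hzx hpx hqx
  have hgf : ENNReal.ofReal ((w x)⁻¹ * p x) + ENNReal.ofReal (w x * q x)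
      = ENNReal.ofReal (2 * Real.sqrt (p x * q x)) :=
    le_antisymm (tsub_eq_zero_iff_le.mp hzx) (hpt x)
  rw [← ENNReal.ofReal_add (ha0 x) (hb0 x)] at hgf
  have hreal : (w x)⁻¹ * p x + w x * q x = 2 * Real.sqrt (p x * q x) :=
    (ENNReal.ofReal_eq_ofReal_iff (add_nonneg (ha0 x) (hb0 x)) (by positivity)).mp hgf
  have heq : (w x)⁻¹ * p x = w x * q x := by
    apply amgm_eq _ _ (ha0 x) (hb0 x)
    rw [hab x]
    exact hreal
  have hwne := (hw x).ne'
  have hw2 : p x / q x = (w x) ^ 2 := by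
    field_simp at heq
    field_simp
    nlinarith [heq]
  rw [hw2, Real.sqrt_sq (hw x).le]
end

section
/- For every measurable g : Ω → ℝ with g < 1/2 pointwise and such that ∫ (1 − 2g) p dμ < ∞ and ∫ (1 − 2g)^{-1} q dμ < ∞, one has ∫ g p dμ − ∫ (g/(1 − 2g)) q dμ ≤ (1/2)∫ (√p − √q)² dμ. That is, the variational (dual) objective for the squared Hellinger divergence is bounded above by the squared Hellinger distance. -/
open MeasureTheory

/-- For every measurable `g : Ω → ℝ` with `g < 1/2` pointwise and such that
`∫ (1 − 2g) p dμ < ∞` and `∫ (1 − 2g)⁻¹ q dμ < ∞`, one has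
`∫ g p dμ − ∫ (g/(1 − 2g)) q dμ ≤ (1/2)∫ (√p − √q)² dμ`; that is, the variational (dual)
objective for the squared Hellinger divergence is bounded above by the squared Hellinger
distance. -/
theorem stmt_6 {Ω : Type*} [MeasurableSpace Ω] (μ : Measure Ω) [SigmaFinite μ]
    (p q : Ω → ℝ) (hpm : Measurable p) (hqm : Measurable q)
    (hp0 : ∀ x, 0 ≤ p x) (hq0 : ∀ x, 0 ≤ q x)
    (hpi : Integrable p μ) (hqi : Integrable q μ)
    (hp1 : ∫ x, p x ∂μ = 1) (hq1 : ∫ x, q x ∂μ = 1)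
    (g : Ω → ℝ) (hgm : Measurable g) (hg : ∀ x, g x < 1 / 2)
    (h1 : Integrable (fun x => (1 - 2 * g x) * p x) μ)
    (h2 : Integrable (fun x => (1 - 2 * g x)⁻¹ * q x) μ) :
    ∫ x, g x * p x ∂μ - ∫ x, (g x / (1 - 2 * g x)) * q x ∂μ
      ≤ (1 / 2) * ∫ x, (Real.sqrt (p x) - Real.sqrt (q x)) ^ 2 ∂μ := by
  have ha : ∀ x, 0 < 1 - 2 * g x := fun x => by linarith [hg x]
  -- integrability of g * p
  have igp : Integrable (fun x => g x * p x) μ := by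
    have : (fun x => g x * p x) = fun x => (p x - (1 - 2 * g x) * p x) / 2 := by
      funext x; ring
    rw [this]
    exact (hpi.sub h1).div_const 2
  -- integrability of (g/(1-2g)) * q
  have igq : Integrable (fun x => (g x / (1 - 2 * g x)) * q x) μ := by
    have : (fun x => (g x / (1 - 2 * g x)) * q x)
        = fun x => ((1 - 2 * g x)⁻¹ * q x - q x) / 2 := by
      funext x
      have hax := (ha x).ne'
      have h3 : (1 - 2 * g x)⁻¹ * (1 - 2 * g x) = 1 := inv_mul_cancel₀ hax
      linear_combination (-(q x) / 2) * h3
    rw [this]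
    exact (h2.sub hqi).div_const 2
  -- integrability of the squared difference of square roots
  have iRHS : Integrable (fun x => (Real.sqrt (p x) - Real.sqrt (q x)) ^ 2) μ := by
    refine Integrable.mono' ((hpi.const_mul 2).add (hqi.const_mul 2))
      ((hpm.sqrt.sub hqm.sqrt).pow_const 2).aestronglyMeasurable
      (Filter.Eventually.of_forall fun x => ?_)
    have hs := Real.sq_sqrt (hp0 x)
    have ht := Real.sq_sqrt (hq0 x)
    have h1' := Real.sqrt_nonneg (p x)
    have h2' := Real.sqrt_nonneg (q x)
    simp only [Pi.add_apply, Real.norm_eq_abs]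
    rw [abs_of_nonneg (sq_nonneg _)]
    nlinarith [sq_nonneg (Real.sqrt (p x) + Real.sqrt (q x))]
  -- pointwise inequality
  have key : ∀ x, g x * p x - (g x / (1 - 2 * g x)) * q x
      ≤ (1 / 2) * (Real.sqrt (p x) - Real.sqrt (q x)) ^ 2 := by
    intro x
    have hax : (1 - 2 * g x) ≠ 0 := (ha x).ne'
    have hs : Real.sqrt (p x) ^ 2 = p x := Real.sq_sqrt (hp0 x)
    have ht : Real.sqrt (q x) ^ 2 = q x := Real.sq_sqrt (hq0 x)
    have hid : g x * p x - (g x / (1 - 2 * g x)) * q x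
        = (1 / 2) * (Real.sqrt (p x) - Real.sqrt (q x)) ^ 2
          - ((1 - 2 * g x) * Real.sqrt (p x) - Real.sqrt (q x)) ^ 2 / (2 * (1 - 2 * g x)) := by
      have h3 : (1 - 2 * g x)⁻¹ * (1 - 2 * g x) = 1 := inv_mul_cancel₀ hax
      rw [mul_comm 2 (1 - 2 * g x), ← div_div]
      linear_combination (-(g x)) * hs + (((1 - 2 * g x)⁻¹ - 1) / 2) * ht
        + ((1 - 2 * g x) * Real.sqrt (p x) ^ 2 / 2 - Real.sqrt (p x) * Real.sqrt (q x) + q x / 2) * h3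
    rw [hid]
    have hnn : 0 ≤ ((1 - 2 * g x) * Real.sqrt (p x) - Real.sqrt (q x)) ^ 2 / (2 * (1 - 2 * g x)) :=
      div_nonneg (sq_nonneg _) (by linarith [ha x])
    linarith
  rw [← integral_sub igp igq]
  calc ∫ x, (g x * p x - (g x / (1 - 2 * g x)) * q x) ∂μ
      ≤ ∫ x, (1 / 2) * (Real.sqrt (p x) - Real.sqrt (q x)) ^ 2 ∂μ :=
        integral_mono (igp.sub igq) (iRHS.const_mul _) key
    _ = (1 / 2) * ∫ x, (Real.sqrt (p x) - Real.sqrt (q x)) ^ 2 ∂μ := integral_const_mul _ _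
end

section
/- Suppose p and q are μ-a.e. strictly positive and let g* = 1/2 − (1/2)√(q/p). Then g* < 1/2 pointwise and ∫ g* p dμ − ∫ (g*/(1 − 2g*)) q dμ = (1/2)∫ (√p − √q)² dμ; i.e., g* attains the squared Hellinger distance in the variational (dual) objective for the squared Hellinger divergence. -/
open MeasureTheory

/-- Suppose `p` and `q` are `μ`-a.e. strictly positive and let
`g* = 1/2 − (1/2)√(q/p)`. Then `g* < 1/2` (a.e.-)pointwise and
`∫ g* p dμ − ∫ (g*/(1 − 2g*)) q dμ = (1/2)∫ (√p − √q)² dμ`; i.e., `g*` attains the squared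
Hellinger distance in the variational (dual) objective for the squared Hellinger divergence. -/
theorem stmt_7 {Ω : Type*} [MeasurableSpace Ω] (μ : Measure Ω) [SigmaFinite μ]
    (p q : Ω → ℝ) (hpm : Measurable p) (hqm : Measurable q)
    (hp0 : ∀ x, 0 ≤ p x) (hq0 : ∀ x, 0 ≤ q x)
    (hpi : Integrable p μ) (hqi : Integrable q μ)
    (hp1 : ∫ x, p x ∂μ = 1) (hq1 : ∫ x, q x ∂μ = 1)
    (hppos : ∀ᵐ x ∂μ, 0 < p x) (hqpos : ∀ᵐ x ∂μ, 0 < q x)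
    (g : Ω → ℝ) (hgdef : ∀ x, g x = 1 / 2 - (1 / 2) * Real.sqrt (q x / p x)) :
    (∀ᵐ x ∂μ, g x < 1 / 2) ∧
    ∫ x, g x * p x ∂μ - ∫ x, (g x / (1 - 2 * g x)) * q x ∂μ
      = (1 / 2) * ∫ x, (Real.sqrt (p x) - Real.sqrt (q x)) ^ 2 ∂μ := by
  -- integrability of √(p q)
  have hFm : Measurable fun x => Real.sqrt (p x) * Real.sqrt (q x) :=
    hpm.sqrt.mul hqm.sqrt
  have hFi : Integrable (fun x => Real.sqrt (p x) * Real.sqrt (q x)) μ := by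
    refine Integrable.mono' ((hpi.add hqi).const_mul (1 / 2)) hFm.aestronglyMeasurable ?_
    filter_upwards with x
    have ha := Real.sq_sqrt (hp0 x)
    have hb := Real.sq_sqrt (hq0 x)
    have h1 : 0 ≤ Real.sqrt (p x) := Real.sqrt_nonneg _
    have h2 : 0 ≤ Real.sqrt (q x) := Real.sqrt_nonneg _
    simp only [Pi.add_apply]
    rw [Real.norm_eq_abs, abs_of_nonneg (mul_nonneg h1 h2)]
    nlinarith [sq_nonneg (Real.sqrt (p x) - Real.sqrt (q x))]
  constructor
  · filter_upwards [hppos, hqpos] with x hp hq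
    rw [hgdef]
    have : 0 < Real.sqrt (q x / p x) := Real.sqrt_pos.mpr (div_pos hq hp)
    linarith
  · have h1 : ∀ᵐ x ∂μ, g x * p x
        = (1 / 2) * p x - (1 / 2) * (Real.sqrt (p x) * Real.sqrt (q x)) := by
      filter_upwards [hppos, hqpos] with x hp hq
      have ha : 0 < Real.sqrt (p x) := Real.sqrt_pos.mpr hp
      have hb : 0 < Real.sqrt (q x) := Real.sqrt_pos.mpr hq
      have ha2 : Real.sqrt (p x) ^ 2 = p x := Real.sq_sqrt hp.le
      have hb2 : Real.sqrt (q x) ^ 2 = q x := Real.sq_sqrt hq.le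
      have hs : Real.sqrt (q x / p x) = Real.sqrt (q x) / Real.sqrt (p x) :=
        Real.sqrt_div (hq0 x) _
      rw [hgdef, hs]
      field_simp
      nlinarith
    have h2 : ∀ᵐ x ∂μ, (g x / (1 - 2 * g x)) * q x
        = (1 / 2) * (Real.sqrt (p x) * Real.sqrt (q x)) - (1 / 2) * q x := by
      filter_upwards [hppos, hqpos] with x hp hq
      have ha : 0 < Real.sqrt (p x) := Real.sqrt_pos.mpr hp
      have hb : 0 < Real.sqrt (q x) := Real.sqrt_pos.mpr hq
      have ha2 : Real.sqrt (p x) ^ 2 = p x := Real.sq_sqrt hp.le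
      have hb2 : Real.sqrt (q x) ^ 2 = q x := Real.sq_sqrt hq.le
      have hs : Real.sqrt (q x / p x) = Real.sqrt (q x) / Real.sqrt (p x) :=
        Real.sqrt_div (hq0 x) _
      rw [hgdef, hs]
      have hd : 1 - 2 * (1 / 2 - 1 / 2 * (Real.sqrt (q x) / Real.sqrt (p x)))
          = Real.sqrt (q x) / Real.sqrt (p x) := by ring
      rw [hd]
      field_simp
      nlinarith
    have h3 : ∀ᵐ x ∂μ, (Real.sqrt (p x) - Real.sqrt (q x)) ^ 2
        = p x + q x - 2 * (Real.sqrt (p x) * Real.sqrt (q x)) := by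
      filter_upwards with x
      have ha2 : Real.sqrt (p x) ^ 2 = p x := Real.sq_sqrt (hp0 x)
      have hb2 : Real.sqrt (q x) ^ 2 = q x := Real.sq_sqrt (hq0 x)
      nlinarith
    rw [integral_congr_ae h1, integral_congr_ae h2, integral_congr_ae h3]
    rw [integral_sub (hpi.const_mul _) (hFi.const_mul _),
      integral_sub (hFi.const_mul _) (hqi.const_mul _),
      integral_sub (show Integrable (fun x => p x + q x) μ from hpi.add hqi) (hFi.const_mul _),
      integral_const_mul, integral_const_mul, integral_const_mul, integral_const_mul,
      hp1, hq1, integral_add hpi hqi, hp1, hq1]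
    ring
end

section
/- Let w₀ : Ω → (0,∞) be measurable with Z_p := ∫ w₀^{-1} p dμ ∈ (0,∞) and Z_q := ∫ w₀ q dμ ∈ (0,∞). Let T = {A₁, …, A_m} be a finite measurable partition of Ω with a_j := ∫_{A_j} w₀^{-1} p dμ > 0 and b_j := ∫_{A_j} w₀ q dμ > 0 for all j, and define discrete probability vectors P_T(j) = a_j / Z_p and Q_T(j) = b_j / Z_q, and the discrete Hellinger distance H(P_T, Q_T) = (1/√2)·√(∑_{j=1}^m (√P_T(j) − √Q_T(j))²). Then the minimum over β ∈ ℝ^m of the balancing loss of w₀·exp(∑_j β_j 1_{A_j}) equals 2√(Z_p Z_q) · ∑_{j=1}^m √(P_T(j) Q_T(j)) = 2√(Z_p Z_q) · (1 − H(P_T, Q_T)²). Consequently, among such partitions, a partition minimizes the partition-optimal balancing loss if and only if it maximizes the discrete Hellinger distance H(P_T, Q_T). -/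
open MeasureTheory

section aux
variable {Ω : Type*} [MeasurableSpace Ω] {μ : Measure Ω}

lemma part_sum_single {m : ℕ} {A : Fin m → Set Ω}
    (hdisj : Pairwise fun i j => Disjoint (A i) (A j))
    (f : Fin m → Ω → ℝ) {x : Ω} {j : Fin m} (hj : x ∈ A j) :
    ∑ i, Set.indicator (A i) (f i) x = f j x := by
  rw [Finset.sum_eq_single_of_mem j (Finset.mem_univ j)]
  · exact Set.indicator_of_mem hj (f j)
  · intro i _ hij
    exact Set.indicator_of_notMem
      (fun hx => Set.disjoint_left.mp (hdisj hij) hx hj) (f i)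

lemma part_integral {m : ℕ} {A : Fin m → Set Ω} (hm : ∀ j, MeasurableSet (A j))
    (hdisj : Pairwise fun i j => Disjoint (A i) (A j))
    (hcov : ⋃ j, A j = Set.univ) {f : Ω → ℝ} (hfi : Integrable f μ) :
    ∑ j, ∫ x in A j, f x ∂μ = ∫ x, f x ∂μ := by
  have hmem : ∀ x : Ω, ∃ j, x ∈ A j := by
    intro x
    have : x ∈ ⋃ j, A j := hcov ▸ Set.mem_univ x
    simpa using this
  have h1 : ∫ x, f x ∂μ = ∫ x, ∑ j, Set.indicator (A j) f x ∂μ := by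
    refine integral_congr_ae (Filter.Eventually.of_forall fun x => ?_)
    obtain ⟨j, hj⟩ := hmem x
    exact (part_sum_single hdisj (fun _ => f) hj).symm
  rw [h1, integral_finset_sum _ (fun j _ => hfi.indicator (hm j))]
  exact Finset.sum_congr rfl fun j _ => (integral_indicator (hm j)).symm

lemma amgm_exp {a b : ℝ} (ha : 0 ≤ a) (hb : 0 ≤ b) (t : ℝ) :
    2 * Real.sqrt (a * b) ≤ Real.exp (-t) * a + Real.exp t * b := by
  have h1 : 0 ≤ Real.exp (-t) * a := by positivity
  have h2 : 0 ≤ Real.exp t * b := by positivity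
  have h3 : Real.sqrt (a * b) = Real.sqrt (Real.exp (-t) * a) * Real.sqrt (Real.exp t * b) := by
    rw [← Real.sqrt_mul h1]
    congr 1
    rw [Real.exp_neg]
    field_simp
  have h4 := Real.sq_sqrt h1
  have h5 := Real.sq_sqrt h2
  nlinarith [sq_nonneg (Real.sqrt (Real.exp (-t) * a) - Real.sqrt (Real.exp t * b))]

lemma amgm_eq_s9 {a b : ℝ} (ha : 0 < a) (hb : 0 < b) :
    Real.exp (-(Real.log (Real.sqrt a / Real.sqrt b))) * a
      + Real.exp (Real.log (Real.sqrt a / Real.sqrt b)) * b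
      = 2 * Real.sqrt (a * b) := by
  have hsa : 0 < Real.sqrt a := Real.sqrt_pos.mpr ha
  have hsb : 0 < Real.sqrt b := Real.sqrt_pos.mpr hb
  have he : Real.exp (Real.log (Real.sqrt a / Real.sqrt b)) = Real.sqrt a / Real.sqrt b :=
    Real.exp_log (by positivity)
  rw [Real.exp_neg, he, Real.sqrt_mul ha.le]
  have h4 := Real.sq_sqrt ha.le
  have h5 := Real.sq_sqrt hb.le
  field_simp
  nlinarith

lemma hellinger_eq {m : ℕ} {P Q : Fin m → ℝ} (hP : ∀ j, 0 ≤ P j) (hQ : ∀ j, 0 ≤ Q j)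
    (hP1 : ∑ j, P j = 1) (hQ1 : ∑ j, Q j = 1) :
    1 - (Real.sqrt (∑ j, (Real.sqrt (P j) - Real.sqrt (Q j)) ^ 2) / Real.sqrt 2) ^ 2
      = ∑ j, Real.sqrt (P j * Q j) := by
  have hS : 0 ≤ ∑ j, (Real.sqrt (P j) - Real.sqrt (Q j)) ^ 2 :=
    Finset.sum_nonneg fun j _ => sq_nonneg _
  rw [div_pow, Real.sq_sqrt hS, Real.sq_sqrt (by norm_num : (0:ℝ) ≤ 2)]
  have hexp : ∑ j, (Real.sqrt (P j) - Real.sqrt (Q j)) ^ 2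
      = 2 - 2 * ∑ j, Real.sqrt (P j * Q j) := by
    have : ∀ j : Fin m, (Real.sqrt (P j) - Real.sqrt (Q j)) ^ 2
        = P j + Q j - 2 * Real.sqrt (P j * Q j) := by
      intro j
      rw [sub_sq, Real.sq_sqrt (hP j), Real.sq_sqrt (hQ j), Real.sqrt_mul (hP j)]
      ring
    rw [Finset.sum_congr rfl fun j _ => this j]
    rw [Finset.sum_sub_distrib, Finset.sum_add_distrib, hP1, hQ1, ← Finset.mul_sum]
    ring
  rw [hexp]; ring

end aux


/-- Let `w₀ : Ω → (0,∞)` be measurable with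
`Z_p := ∫ w₀⁻¹ p dμ ∈ (0,∞)` and `Z_q := ∫ w₀ q dμ ∈ (0,∞)`. Let `T = {A₁, …, A_m}` be a
finite measurable partition of `Ω` with `a_j > 0` and `b_j > 0` for all `j`, and define the
discrete probability vectors `P_T(j) = a_j / Z_p` and `Q_T(j) = b_j / Z_q`, and the discrete
Hellinger distance `H(P_T,Q_T) = (1/√2)·√(∑_j (√P_T(j) − √Q_T(j))²)`. Then the minimum over
`β ∈ ℝ^m` of the balancing loss of `w₀·exp(∑_j β_j 1_{A_j})` equals
`2√(Z_p Z_q) · ∑_j √(P_T(j) Q_T(j)) = 2√(Z_p Z_q)·(1 − H(P_T,Q_T)²)`. Consequently, among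
such partitions, a partition minimizes the partition-optimal balancing loss iff it maximizes
the discrete Hellinger distance. -/
theorem stmt_9 {Ω : Type*} [MeasurableSpace Ω] (μ : Measure Ω) [SigmaFinite μ]
    (p q : Ω → ℝ) (hpm : Measurable p) (hqm : Measurable q)
    (hp0 : ∀ x, 0 ≤ p x) (hq0 : ∀ x, 0 ≤ q x)
    (hpi : Integrable p μ) (hqi : Integrable q μ)
    (hp1 : ∫ x, p x ∂μ = 1) (hq1 : ∫ x, q x ∂μ = 1)
    (w₀ : Ω → ℝ) (hw₀m : Measurable w₀) (hw₀ : ∀ x, 0 < w₀ x)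
    (Zp Zq : ℝ)
    (hZpi : Integrable (fun x => (w₀ x)⁻¹ * p x) μ)
    (hZqi : Integrable (fun x => w₀ x * q x) μ)
    (hZp : Zp = ∫ x, (w₀ x)⁻¹ * p x ∂μ) (hZq : Zq = ∫ x, w₀ x * q x ∂μ)
    (hZp0 : 0 < Zp) (hZq0 : 0 < Zq)
    -- the partition T = {A₁, …, A_m₁} and its induced discrete distributions
    (m₁ : ℕ) (A₁ : Fin m₁ → Set Ω) (hA₁m : ∀ j, MeasurableSet (A₁ j))
    (hA₁disj : Pairwise fun i j => Disjoint (A₁ i) (A₁ j))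
    (hA₁cov : ⋃ j, A₁ j = Set.univ)
    (a₁ b₁ : Fin m₁ → ℝ)
    (ha₁ : ∀ j, a₁ j = ∫ x in A₁ j, (w₀ x)⁻¹ * p x ∂μ)
    (hb₁ : ∀ j, b₁ j = ∫ x in A₁ j, w₀ x * q x ∂μ)
    (ha₁0 : ∀ j, 0 < a₁ j) (hb₁0 : ∀ j, 0 < b₁ j)
    (P₁ Q₁ : Fin m₁ → ℝ)
    (hP₁ : ∀ j, P₁ j = a₁ j / Zp) (hQ₁ : ∀ j, Q₁ j = b₁ j / Zq)
    (H₁ : ℝ)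
    (hH₁ : H₁ = Real.sqrt (∑ j, (Real.sqrt (P₁ j) - Real.sqrt (Q₁ j)) ^ 2) / Real.sqrt 2)
    -- a second partition T' = {A₁', …, A_m₂'} of the same kind, for the comparison claim
    (m₂ : ℕ) (A₂ : Fin m₂ → Set Ω) (hA₂m : ∀ j, MeasurableSet (A₂ j))
    (hA₂disj : Pairwise fun i j => Disjoint (A₂ i) (A₂ j))
    (hA₂cov : ⋃ j, A₂ j = Set.univ)
    (a₂ b₂ : Fin m₂ → ℝ)
    (ha₂ : ∀ j, a₂ j = ∫ x in A₂ j, (w₀ x)⁻¹ * p x ∂μ)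
    (hb₂ : ∀ j, b₂ j = ∫ x in A₂ j, w₀ x * q x ∂μ)
    (ha₂0 : ∀ j, 0 < a₂ j) (hb₂0 : ∀ j, 0 < b₂ j)
    (P₂ Q₂ : Fin m₂ → ℝ)
    (hP₂ : ∀ j, P₂ j = a₂ j / Zp) (hQ₂ : ∀ j, Q₂ j = b₂ j / Zq)
    (H₂ : ℝ)
    (hH₂ : H₂ = Real.sqrt (∑ j, (Real.sqrt (P₂ j) - Real.sqrt (Q₂ j)) ^ 2) / Real.sqrt 2) :
    -- the partition-optimal balancing loss on T
    IsLeast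
      {y : ℝ | ∃ β : Fin m₁ → ℝ,
        y = (∫ x, (w₀ x * Real.exp (∑ j, Set.indicator (A₁ j) (fun _ => β j) x))⁻¹ * p x ∂μ)
          + ∫ x, (w₀ x * Real.exp (∑ j, Set.indicator (A₁ j) (fun _ => β j) x)) * q x ∂μ}
      (2 * Real.sqrt (Zp * Zq) * ∑ j, Real.sqrt (P₁ j * Q₁ j)) ∧
    2 * Real.sqrt (Zp * Zq) * ∑ j, Real.sqrt (P₁ j * Q₁ j)
      = 2 * Real.sqrt (Zp * Zq) * (1 - H₁ ^ 2) ∧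
    -- consequently: lower partition-optimal loss ↔ larger discrete Hellinger distance
    (2 * Real.sqrt (Zp * Zq) * ∑ j, Real.sqrt (P₁ j * Q₁ j)
        ≤ 2 * Real.sqrt (Zp * Zq) * ∑ j, Real.sqrt (P₂ j * Q₂ j)
      ↔ H₂ ≤ H₁) := by

  -- loss decomposition over the partition
  have hmem : ∀ x : Ω, ∃ j, x ∈ A₁ j := fun x => by
    have : x ∈ ⋃ j, A₁ j := hA₁cov ▸ Set.mem_univ x
    simpa using this
  have loss_eq : ∀ β : Fin m₁ → ℝ,
      (∫ x, (w₀ x * Real.exp (∑ j, Set.indicator (A₁ j) (fun _ => β j) x))⁻¹ * p x ∂μ)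
        + (∫ x, (w₀ x * Real.exp (∑ j, Set.indicator (A₁ j) (fun _ => β j) x)) * q x ∂μ)
      = ∑ j, (Real.exp (-(β j)) * a₁ j + Real.exp (β j) * b₁ j) := by
    intro β
    have e1 : (∫ x, (w₀ x * Real.exp (∑ j, Set.indicator (A₁ j) (fun _ => β j) x))⁻¹ * p x ∂μ)
        = ∑ j, Real.exp (-(β j)) * a₁ j := by
      have hpt : ∀ x, (w₀ x * Real.exp (∑ j, Set.indicator (A₁ j) (fun _ => β j) x))⁻¹ * p x
          = ∑ j, Set.indicator (A₁ j) (fun y => Real.exp (-(β j)) * ((w₀ y)⁻¹ * p y)) x := by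
        intro x
        obtain ⟨j, hj⟩ := hmem x
        rw [part_sum_single hA₁disj (fun i _ => β i) hj,
          part_sum_single hA₁disj (fun i y => Real.exp (-(β i)) * ((w₀ y)⁻¹ * p y)) hj,
          mul_inv, Real.exp_neg]
        ring
      rw [integral_congr_ae (Filter.Eventually.of_forall hpt),
        integral_finset_sum _ (fun j _ => (hZpi.const_mul _).indicator (hA₁m j))]
      refine Finset.sum_congr rfl fun j _ => ?_
      rw [integral_indicator (hA₁m j), integral_const_mul, ← ha₁ j]
    have e2 : (∫ x, (w₀ x * Real.exp (∑ j, Set.indicator (A₁ j) (fun _ => β j) x)) * q x ∂μ)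
        = ∑ j, Real.exp (β j) * b₁ j := by
      have hpt : ∀ x, (w₀ x * Real.exp (∑ j, Set.indicator (A₁ j) (fun _ => β j) x)) * q x
          = ∑ j, Set.indicator (A₁ j) (fun y => Real.exp (β j) * (w₀ y * q y)) x := by
        intro x
        obtain ⟨j, hj⟩ := hmem x
        rw [part_sum_single hA₁disj (fun i _ => β i) hj,
          part_sum_single hA₁disj (fun i y => Real.exp (β i) * (w₀ y * q y)) hj]
        ring
      rw [integral_congr_ae (Filter.Eventually.of_forall hpt),
        integral_finset_sum _ (fun j _ => (hZqi.const_mul _).indicator (hA₁m j))]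
      refine Finset.sum_congr rfl fun j _ => ?_
      rw [integral_indicator (hA₁m j), integral_const_mul, ← hb₁ j]
    rw [e1, e2, ← Finset.sum_add_distrib]
  -- the claimed minimum in terms of a, b
  have hzz : 0 < Real.sqrt (Zp * Zq) := Real.sqrt_pos.mpr (mul_pos hZp0 hZq0)
  have hmin_eq : 2 * Real.sqrt (Zp * Zq) * ∑ j, Real.sqrt (P₁ j * Q₁ j)
      = ∑ j, 2 * Real.sqrt (a₁ j * b₁ j) := by
    rw [Finset.mul_sum]
    refine Finset.sum_congr rfl fun j _ => ?_
    rw [hP₁ j, hQ₁ j, div_mul_div_comm,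
      Real.sqrt_div (mul_nonneg (ha₁0 j).le (hb₁0 j).le)]
    field_simp
  -- sums to one
  have hsa₁ : ∑ j, a₁ j = Zp := by
    rw [hZp, ← part_integral hA₁m hA₁disj hA₁cov hZpi]
    exact Finset.sum_congr rfl fun j _ => ha₁ j
  have hsb₁ : ∑ j, b₁ j = Zq := by
    rw [hZq, ← part_integral hA₁m hA₁disj hA₁cov hZqi]
    exact Finset.sum_congr rfl fun j _ => hb₁ j
  have hsa₂ : ∑ j, a₂ j = Zp := by
    rw [hZp, ← part_integral hA₂m hA₂disj hA₂cov hZpi]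
    exact Finset.sum_congr rfl fun j _ => ha₂ j
  have hsb₂ : ∑ j, b₂ j = Zq := by
    rw [hZq, ← part_integral hA₂m hA₂disj hA₂cov hZqi]
    exact Finset.sum_congr rfl fun j _ => hb₂ j
  have hP₁1 : ∑ j, P₁ j = 1 := by
    simp_rw [hP₁]
    rw [← Finset.sum_div, hsa₁, div_self hZp0.ne']
  have hQ₁1 : ∑ j, Q₁ j = 1 := by
    simp_rw [hQ₁]
    rw [← Finset.sum_div, hsb₁, div_self hZq0.ne']
  have hP₂1 : ∑ j, P₂ j = 1 := by
    simp_rw [hP₂]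
    rw [← Finset.sum_div, hsa₂, div_self hZp0.ne']
  have hQ₂1 : ∑ j, Q₂ j = 1 := by
    simp_rw [hQ₂]
    rw [← Finset.sum_div, hsb₂, div_self hZq0.ne']
  have hH₁sq : 1 - H₁ ^ 2 = ∑ j, Real.sqrt (P₁ j * Q₁ j) := by
    rw [hH₁]
    exact hellinger_eq (fun j => by rw [hP₁]; exact div_nonneg (ha₁0 j).le hZp0.le)
      (fun j => by rw [hQ₁]; exact div_nonneg (hb₁0 j).le hZq0.le) hP₁1 hQ₁1
  have hH₂sq : 1 - H₂ ^ 2 = ∑ j, Real.sqrt (P₂ j * Q₂ j) := by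
    rw [hH₂]
    exact hellinger_eq (fun j => by rw [hP₂]; exact div_nonneg (ha₂0 j).le hZp0.le)
      (fun j => by rw [hQ₂]; exact div_nonneg (hb₂0 j).le hZq0.le) hP₂1 hQ₂1
  refine ⟨⟨⟨fun j => Real.log (Real.sqrt (a₁ j) / Real.sqrt (b₁ j)), ?_⟩, ?_⟩, ?_, ?_⟩
  · rw [loss_eq, hmin_eq]
    exact Finset.sum_congr rfl fun j _ => (amgm_eq_s9 (ha₁0 j) (hb₁0 j)).symm
  · rintro y ⟨β, rfl⟩
    rw [loss_eq, hmin_eq]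
    exact Finset.sum_le_sum fun j _ => amgm_exp (ha₁0 j).le (hb₁0 j).le (β j)
  · rw [hH₁sq]
  · have hH₁0 : 0 ≤ H₁ := by rw [hH₁]; positivity
    have hH₂0 : 0 ≤ H₂ := by rw [hH₂]; positivity
    rw [← hH₁sq, ← hH₂sq]
    constructor
    · intro h
      have h2 : H₂ ^ 2 ≤ H₁ ^ 2 := by nlinarith
      nlinarith
    · intro h
      have h2 : H₂ ^ 2 ≤ H₁ ^ 2 := by nlinarith
      nlinarith
end

section
/- Suppose w* : Ω → (0,∞) is measurable with l(w*) < ∞ and l(w*) ≤ l(w) for every measurable w : Ω → (0,∞). Then the minimizer is balanced: ∫ (w*)^{-1} p dμ = ∫ w* q dμ. -/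
open MeasureTheory
open scoped ENNReal

/-- Suppose `w* : Ω → (0,∞)` is measurable with `l(w*) < ∞` and
`l(w*) ≤ l(w)` for every measurable `w : Ω → (0,∞)`. Then the minimizer is balanced:
`∫ (w*)⁻¹ p dμ = ∫ w* q dμ`. -/
theorem stmt_11 {Ω : Type*} [MeasurableSpace Ω] (μ : Measure Ω) [SigmaFinite μ]
    (p q : Ω → ℝ) (hpm : Measurable p) (hqm : Measurable q)
    (hp0 : ∀ x, 0 ≤ p x) (hq0 : ∀ x, 0 ≤ q x)
    (hp1 : ∫⁻ x, ENNReal.ofReal (p x) ∂μ = 1)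
    (hq1 : ∫⁻ x, ENNReal.ofReal (q x) ∂μ = 1)
    (wstar : Ω → ℝ) (hwm : Measurable wstar) (hw : ∀ x, 0 < wstar x)
    (hfin : (∫⁻ x, ENNReal.ofReal ((wstar x)⁻¹ * p x) ∂μ)
        + (∫⁻ x, ENNReal.ofReal (wstar x * q x) ∂μ) < ⊤)
    (hmin : ∀ w : Ω → ℝ, Measurable w → (∀ x, 0 < w x) →
      (∫⁻ x, ENNReal.ofReal ((wstar x)⁻¹ * p x) ∂μ)
          + (∫⁻ x, ENNReal.ofReal (wstar x * q x) ∂μ)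
        ≤ (∫⁻ x, ENNReal.ofReal ((w x)⁻¹ * p x) ∂μ)
          + (∫⁻ x, ENNReal.ofReal (w x * q x) ∂μ)) :
    (∫⁻ x, ENNReal.ofReal ((wstar x)⁻¹ * p x) ∂μ)
      = ∫⁻ x, ENNReal.ofReal (wstar x * q x) ∂μ := by
  set A := ∫⁻ x, ENNReal.ofReal ((wstar x)⁻¹ * p x) ∂μ with hA
  set B := ∫⁻ x, ENNReal.ofReal (wstar x * q x) ∂μ with hB
  have hAfin : A ≠ ⊤ := by
    intro h; rw [h] at hfin; simp at hfin
  have hBfin : B ≠ ⊤ := by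
    intro h; rw [h] at hfin; simp at hfin
  -- key scaling inequality
  have key : ∀ c : ℝ, 0 < c →
      A + B ≤ ENNReal.ofReal c⁻¹ * A + ENNReal.ofReal c * B := by
    intro c hc
    have h1 := hmin (fun x => c * wstar x) (measurable_const.mul hwm)
      (fun x => mul_pos hc (hw x))
    have e1 : (∫⁻ x, ENNReal.ofReal ((c * wstar x)⁻¹ * p x) ∂μ)
        = ENNReal.ofReal c⁻¹ * A := by
      rw [hA, ← lintegral_const_mul _ (by
        exact ((hwm.inv.mul hpm).ennreal_ofReal))]
      congr 1; ext x
      rw [← ENNReal.ofReal_mul (by positivity)]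
      congr 1; field_simp
    have e2 : (∫⁻ x, ENNReal.ofReal (c * wstar x * q x) ∂μ)
        = ENNReal.ofReal c * B := by
      rw [hB, ← lintegral_const_mul _ (by
        exact ((hwm.mul hqm).ennreal_ofReal))]
      congr 1; ext x
      rw [← ENNReal.ofReal_mul hc.le, mul_assoc]
    calc A + B ≤ _ := h1
    _ = ENNReal.ofReal c⁻¹ * A + ENNReal.ofReal c * B := by rw [e1, e2]
  -- pass to real numbers
  set a := A.toReal with ha
  set b := B.toReal with hb
  have ha0 : 0 ≤ a := ENNReal.toReal_nonneg
  have hb0 : 0 ≤ b := ENNReal.toReal_nonneg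
  have keyR : ∀ c : ℝ, 0 < c → a + b ≤ c⁻¹ * a + c * b := by
    intro c hc
    have h := key c hc
    have hr : (A + B).toReal ≤ (ENNReal.ofReal c⁻¹ * A + ENNReal.ofReal c * B).toReal := by
      apply ENNReal.toReal_mono _ h
      exact ENNReal.add_ne_top.2 ⟨ENNReal.mul_ne_top ENNReal.ofReal_ne_top hAfin,
        ENNReal.mul_ne_top ENNReal.ofReal_ne_top hBfin⟩
    rwa [ENNReal.toReal_add hAfin hBfin,
      ENNReal.toReal_add (ENNReal.mul_ne_top ENNReal.ofReal_ne_top hAfin)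
        (ENNReal.mul_ne_top ENNReal.ofReal_ne_top hBfin),
      ENNReal.toReal_mul, ENNReal.toReal_mul, ENNReal.toReal_ofReal (by positivity),
      ENNReal.toReal_ofReal hc.le] at hr
  have hab : a = b := by
    rcases eq_or_lt_of_le hb0 with hb0' | hb0'
    · -- b = 0 : use c = 2
      have h2 := keyR 2 (by norm_num)
      rw [← hb0'] at h2 ⊢
      nlinarith
    · rcases eq_or_lt_of_le ha0 with ha0' | ha0'
      · -- a = 0 : use c = 1/2
        have h2 := keyR (1/2) (by norm_num)
        rw [← ha0'] at h2 ⊢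
        nlinarith
      · -- both positive: c = √a/√b
        have hsa : Real.sqrt a ^ 2 = a := Real.sq_sqrt ha0
        have hsb : Real.sqrt b ^ 2 = b := Real.sq_sqrt hb0
        have hsa0 : 0 < Real.sqrt a := Real.sqrt_pos.2 ha0'
        have hsb0 : 0 < Real.sqrt b := Real.sqrt_pos.2 hb0'
        have h2 := keyR (Real.sqrt a / Real.sqrt b) (by positivity)
        rw [div_eq_mul_inv, mul_inv, inv_inv] at h2
        have e1 : (Real.sqrt a)⁻¹ * Real.sqrt b * a = Real.sqrt a * Real.sqrt b := by
          rw [inv_mul_eq_div, div_mul_eq_mul_div, div_eq_iff hsa0.ne']; linear_combination (-Real.sqrt b) * hsa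
        have e2 : Real.sqrt a * (Real.sqrt b)⁻¹ * b = Real.sqrt a * Real.sqrt b := by
          rw [← div_eq_mul_inv, div_mul_eq_mul_div, div_eq_iff hsb0.ne']; linear_combination (-Real.sqrt a) * hsb
        rw [e1, e2] at h2
        nlinarith [sq_nonneg (Real.sqrt a - Real.sqrt b), hsa, hsb]
  exact (ENNReal.toReal_eq_toReal_iff' hAfin hBfin).1 hab
end

section
/- Let w₀ : Ω → (0,∞) be measurable, and let T and T' be finite measurable partitions of Ω such that T' refines T and every cell A of either partition satisfies 0 < ∫_A w₀^{-1} p dμ < ∞ and 0 < ∫_A w₀ q dμ < ∞. Then the partition-optimal balancing loss is nonincreasing under refinement: 2 ∑_{A' ∈ T'} √( (∫_{A'} w₀^{-1} p dμ)·(∫_{A'} w₀ q dμ) ) ≤ 2 ∑_{A ∈ T} √( (∫_A w₀^{-1} p dμ)·(∫_A w₀ q dμ) ). Equivalently, the minimum of the balancing loss over functions of the form w₀·e^f with f piecewise constant on T' is at most the corresponding minimum over f piecewise constant on T. -/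
open MeasureTheory

lemma aux_sum_sqrt_mul_le {ι : Type*} (s : Finset ι) (a b : ι → ℝ)
    (ha : ∀ i, 0 ≤ a i) (hb : ∀ i, 0 ≤ b i) :
    ∑ i ∈ s, Real.sqrt (a i * b i) ≤ Real.sqrt ((∑ i ∈ s, a i) * ∑ i ∈ s, b i) := by
  rw [Real.sqrt_mul (Finset.sum_nonneg fun i _ => ha i)]
  calc ∑ i ∈ s, Real.sqrt (a i * b i)
      = ∑ i ∈ s, Real.sqrt (a i) * Real.sqrt (b i) :=
        Finset.sum_congr rfl fun i _ => Real.sqrt_mul (ha i) _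
    _ ≤ _ := Real.sum_sqrt_mul_sqrt_le s ha hb

/-- Let `w₀ : Ω → (0,∞)` be measurable, and let `T` and `T'` be finite
measurable partitions of `Ω` such that `T'` refines `T` and every cell `A` of either
partition satisfies `0 < ∫_A w₀⁻¹ p dμ < ∞` and `0 < ∫_A w₀ q dμ < ∞`. Then the
partition-optimal balancing loss is nonincreasing under refinement:
`2 ∑_{A' ∈ T'} √((∫_{A'} w₀⁻¹ p dμ)·(∫_{A'} w₀ q dμ))
  ≤ 2 ∑_{A ∈ T} √((∫_A w₀⁻¹ p dμ)·(∫_A w₀ q dμ))`.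
Equivalently, the minimum of the balancing loss over functions of the form `w₀·e^f` with `f`
piecewise constant on `T'` is at most the corresponding minimum over `f` piecewise constant
on `T`. -/
theorem stmt_12 {Ω : Type*} [MeasurableSpace Ω] (μ : Measure Ω) [SigmaFinite μ]
    (p q : Ω → ℝ) (hpm : Measurable p) (hqm : Measurable q)
    (hp0 : ∀ x, 0 ≤ p x) (hq0 : ∀ x, 0 ≤ q x)
    (hpi : Integrable p μ) (hqi : Integrable q μ)
    (hp1 : ∫ x, p x ∂μ = 1) (hq1 : ∫ x, q x ∂μ = 1)
    (w₀ : Ω → ℝ) (hw₀m : Measurable w₀) (hw₀ : ∀ x, 0 < w₀ x)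
    (m m' : ℕ) (T : Fin m → Set Ω) (T' : Fin m' → Set Ω)
    (hTm : ∀ j, MeasurableSet (T j)) (hT'm : ∀ j, MeasurableSet (T' j))
    (hTdisj : Pairwise fun i j => Disjoint (T i) (T j))
    (hT'disj : Pairwise fun i j => Disjoint (T' i) (T' j))
    (hTcov : ⋃ j, T j = Set.univ) (hT'cov : ⋃ j, T' j = Set.univ)
    -- T' refines T
    (hrefine : ∀ j', ∃ j, T' j' ⊆ T j)
    (haiT : ∀ j, IntegrableOn (fun x => (w₀ x)⁻¹ * p x) (T j) μ)
    (hbiT : ∀ j, IntegrableOn (fun x => w₀ x * q x) (T j) μ)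
    (haT0 : ∀ j, 0 < ∫ x in T j, (w₀ x)⁻¹ * p x ∂μ)
    (hbT0 : ∀ j, 0 < ∫ x in T j, w₀ x * q x ∂μ)
    (haiT' : ∀ j, IntegrableOn (fun x => (w₀ x)⁻¹ * p x) (T' j) μ)
    (hbiT' : ∀ j, IntegrableOn (fun x => w₀ x * q x) (T' j) μ)
    (haT'0 : ∀ j, 0 < ∫ x in T' j, (w₀ x)⁻¹ * p x ∂μ)
    (hbT'0 : ∀ j, 0 < ∫ x in T' j, w₀ x * q x ∂μ) :
    (2 * ∑ j', Real.sqrt ((∫ x in T' j', (w₀ x)⁻¹ * p x ∂μ) * ∫ x in T' j', w₀ x * q x ∂μ)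
      ≤ 2 * ∑ j, Real.sqrt ((∫ x in T j, (w₀ x)⁻¹ * p x ∂μ) * ∫ x in T j, w₀ x * q x ∂μ)) ∧
    sInf {y : ℝ | ∃ f : Ω → ℝ, (∀ j', ∀ x ∈ T' j', ∀ x' ∈ T' j', f x = f x') ∧
        y = (∫ x, (w₀ x * Real.exp (f x))⁻¹ * p x ∂μ)
          + ∫ x, (w₀ x * Real.exp (f x)) * q x ∂μ}
      ≤ sInf {y : ℝ | ∃ f : Ω → ℝ, (∀ j, ∀ x ∈ T j, ∀ x' ∈ T j, f x = f x') ∧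
        y = (∫ x, (w₀ x * Real.exp (f x))⁻¹ * p x ∂μ)
          + ∫ x, (w₀ x * Real.exp (f x)) * q x ∂μ} := by
  classical
  constructor
  · -- Part 1
    choose σ hσ using hrefine
    have hcell : ∀ j, T j = ⋃ j' ∈ Finset.univ.filter (fun j' => σ j' = j), T' j' := by
      intro j
      ext x
      simp only [Set.mem_iUnion, Finset.mem_filter, Finset.mem_univ, true_and]
      constructor
      · intro hx
        have hxU : x ∈ ⋃ j', T' j' := hT'cov ▸ Set.mem_univ x
        obtain ⟨j', hx'⟩ := Set.mem_iUnion.1 hxU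
        refine ⟨j', ?_, hx'⟩
        by_contra h
        exact Set.disjoint_left.1 (hTdisj h) (hσ j' hx') hx
      · rintro ⟨j', hj', hx⟩
        exact hj' ▸ hσ j' hx
    have hsplit : ∀ (g : Ω → ℝ), (∀ j', IntegrableOn g (T' j') μ) → ∀ j,
        ∫ x in T j, g x ∂μ = ∑ j' ∈ Finset.univ.filter (fun j' => σ j' = j), ∫ x in T' j', g x ∂μ := by
      intro g hg j
      rewrite [hcell j]
      exact integral_biUnion_finset _ (fun i _ => hT'm i)
        (fun i _ j2 _ hij => hT'disj hij) (fun i _ => hg i)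
    have key : ∀ j,
        ∑ j' ∈ Finset.univ.filter (fun j' => σ j' = j),
          Real.sqrt ((∫ x in T' j', (w₀ x)⁻¹ * p x ∂μ) * ∫ x in T' j', w₀ x * q x ∂μ)
        ≤ Real.sqrt ((∫ x in T j, (w₀ x)⁻¹ * p x ∂μ) * ∫ x in T j, w₀ x * q x ∂μ) := by
      intro j
      rw [hsplit _ haiT' j, hsplit _ hbiT' j]
      exact aux_sum_sqrt_mul_le _ _ _ (fun i => (haT'0 i).le) (fun i => (hbT'0 i).le)
    have hsum : ∑ j', Real.sqrt ((∫ x in T' j', (w₀ x)⁻¹ * p x ∂μ) * ∫ x in T' j', w₀ x * q x ∂μ)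
        = ∑ j, ∑ j' ∈ Finset.univ.filter (fun j' => σ j' = j),
            Real.sqrt ((∫ x in T' j', (w₀ x)⁻¹ * p x ∂μ) * ∫ x in T' j', w₀ x * q x ∂μ) :=
      (Finset.sum_fiberwise _ _ _).symm
    have := Finset.sum_le_sum (fun j (_ : j ∈ Finset.univ) => key j)
    rw [hsum]
    linarith
  · -- Part 2
    apply csInf_le_csInf
    · refine ⟨0, fun y hy => ?_⟩
      obtain ⟨f, -, rfl⟩ := hy
      have h1 : 0 ≤ ∫ x, (w₀ x * Real.exp (f x))⁻¹ * p x ∂μ :=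
        integral_nonneg fun x => mul_nonneg
          (inv_nonneg.2 (mul_pos (hw₀ x) (Real.exp_pos _)).le) (hp0 x)
      have h2 : 0 ≤ ∫ x, (w₀ x * Real.exp (f x)) * q x ∂μ :=
        integral_nonneg fun x => mul_nonneg (mul_pos (hw₀ x) (Real.exp_pos _)).le (hq0 x)
      linarith
    · exact ⟨_, 0, fun j x _ x' _ => rfl, rfl⟩
    · rintro y ⟨f, hf, rfl⟩
      refine ⟨f, ?_, rfl⟩
      intro j' x hx x' hx'
      obtain ⟨j, hj⟩ := hrefine j'
      exact hf j x (hj hx) x' (hj hx')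
end

section
/- Let μ > 0, λ > 0, a ≥ 0, b ≥ 0, and define λ' = λ + 2a and μ' = √( λ' / (λ/μ² + 2b) ). Then ∫₀^∞ √(λ/(2πz³)) · exp( −λ(z − μ)² / (2μ²z) ) · exp( −a/z − b·z ) dz = √(λ/λ') · exp( λ/μ − λ'/μ' ). That is, the marginal (pseudo-)likelihood obtained by integrating the kernel exp(−a z^{-1} − b z) against the inverse-Gaussian(μ, λ) prior has the closed form √(λ/λ')·exp(λ/μ − λ'/μ'). -/
open MeasureTheory
open Set

private lemma sqrt_cube {z : ℝ} (hz : 0 < z) : Real.sqrt (z ^ 3) = z * Real.sqrt z := by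
  rw [show z ^ 3 = (z * Real.sqrt z) ^ 2 by rw [mul_pow, Real.sq_sqrt hz.le]; ring,
    Real.sqrt_sq (by positivity)]

set_option maxHeartbeats 1000000 in
private lemma key (α β : ℝ) (hα : 0 < α) (hβ : 0 < β) :
    ∫ z in Ioi (0:ℝ), (1 / (z * Real.sqrt z)) * Real.exp (-(α * z) - β / z)
      = Real.sqrt Real.pi / Real.sqrt β * Real.exp (-2 * Real.sqrt (α * β)) := by
  have hsa : 0 < Real.sqrt α := Real.sqrt_pos.mpr hα
  have hsb : 0 < Real.sqrt β := Real.sqrt_pos.mpr hβ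
  set sa := Real.sqrt α with hsadef
  set sb := Real.sqrt β with hsbdef
  set f : ℝ → ℝ := fun z => sa * Real.sqrt z - sb / Real.sqrt z with hfdef
  set f' : ℝ → ℝ := fun z => sa / (2 * Real.sqrt z) + sb / (2 * (z * Real.sqrt z)) with hf'def
  have ha2 : sa ^ 2 = α := Real.sq_sqrt hα.le
  have hb2 : sb ^ 2 = β := Real.sq_sqrt hβ.le
  have hderiv : ∀ z ∈ Ioi (0:ℝ), HasDerivAt f (f' z) z := by
    intro z hz
    have hz0 : (0:ℝ) < z := hz
    have hsz : 0 < Real.sqrt z := Real.sqrt_pos.mpr hz0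
    have hsq : Real.sqrt z ^ 2 = z := Real.sq_sqrt hz0.le
    have h2 : HasDerivAt (fun w => sb * (Real.sqrt w)⁻¹)
        (sb * (-(1 / (2 * Real.sqrt z)) / Real.sqrt z ^ 2)) z :=
      ((Real.hasDerivAt_sqrt hz0.ne').inv hsz.ne').const_mul sb
    have h3 : HasDerivAt (fun w => sa * Real.sqrt w - sb * (Real.sqrt w)⁻¹)
        (sa * (1 / (2 * Real.sqrt z)) - sb * (-(1 / (2 * Real.sqrt z)) / Real.sqrt z ^ 2)) z :=
      ((Real.hasDerivAt_sqrt hz0.ne').const_mul sa).sub h2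
    have hfeq : f = fun w => sa * Real.sqrt w - sb * (Real.sqrt w)⁻¹ := by
      funext w; simp only [hfdef, div_eq_mul_inv]
    have heq : sa * (1 / (2 * Real.sqrt z)) - sb * (-(1 / (2 * Real.sqrt z)) / Real.sqrt z ^ 2)
        = f' z := by
      rw [hf'def]
      field_simp
      nlinarith [hsq, hsz]
    rw [hfeq, ← heq]
    exact h3
  have hmono : StrictMonoOn f (Ioi 0) := by
    apply strictMonoOn_of_deriv_pos (convex_Ioi 0)
    · exact fun z hz => ((hderiv z hz).continuousAt).continuousWithinAt
    · intro z hz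
      rw [interior_Ioi] at hz
      rw [(hderiv z hz).deriv]
      have hsz : 0 < Real.sqrt z := Real.sqrt_pos.mpr hz
      have hz0 : (0:ℝ) < z := hz
      exact add_pos (div_pos hsa (by positivity)) (div_pos hsb (by positivity))
  have himg : f '' Ioi 0 = univ := by
    refine eq_univ_of_forall fun y => ?_
    set s := Real.sqrt (y ^ 2 + 4 * sa * sb) with hsdef
    have hs2 : s ^ 2 = y ^ 2 + 4 * sa * sb := Real.sq_sqrt (by positivity)
    have hs0 : 0 < s := Real.sqrt_pos.mpr (by positivity)
    have hsy : -y < s := by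
      rcases le_or_gt 0 y with h | h
      · linarith
      · have : -y = Real.sqrt (y ^ 2) := by
          rw [Real.sqrt_sq_eq_abs, abs_of_neg h]
        rw [this]
        exact Real.sqrt_lt_sqrt (by positivity) (by nlinarith)
    set t := (y + s) / (2 * sa) with htdef
    have ht : 0 < t := div_pos (by linarith) (by positivity)
    refine ⟨t ^ 2, mem_Ioi.mpr (by positivity), ?_⟩
    show sa * Real.sqrt (t ^ 2) - sb / Real.sqrt (t ^ 2) = y
    rw [Real.sqrt_sq ht.le]
    have hquad : sa * t ^ 2 - y * t - sb = 0 := by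
      have h4 : (2 * sa) * t = y + s := by
        rw [htdef]; field_simp
      nlinarith [h4, hs2]
    field_simp
    nlinarith [hquad, ht]
  have base := integral_image_eq_integral_abs_deriv_smul measurableSet_Ioi
    (fun z hz => (hderiv z hz).hasDerivWithinAt) hmono.injOn (fun u => Real.exp (-u ^ 2))
  rw [himg] at base
  have hgauss : ∫ u in (univ : Set ℝ), Real.exp (-u ^ 2) = Real.sqrt Real.pi := by
    rw [Measure.restrict_univ]
    simpa using integral_gaussian 1
  have hpt : ∀ z ∈ Ioi (0:ℝ), |f' z| • Real.exp (-(f z) ^ 2)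
      = Real.exp (2 * (sa * sb)) *
        ((sa / (2 * Real.sqrt z)) * Real.exp (-(α * z) - β / z)
          + (sb / (2 * (z * Real.sqrt z))) * Real.exp (-(α * z) - β / z)) := by
    intro z hz
    have hz0 : (0:ℝ) < z := hz
    have hsz : 0 < Real.sqrt z := Real.sqrt_pos.mpr hz0
    have hsq : Real.sqrt z ^ 2 = z := Real.sq_sqrt hz0.le
    have habs : |f' z| = f' z :=
      abs_of_pos (add_pos (div_pos hsa (by positivity)) (div_pos hsb (by positivity)))
    have hfsq : (f z) ^ 2 = α * z + β / z - 2 * (sa * sb) := by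
      have e1 : f z = sa * Real.sqrt z - sb / Real.sqrt z := rfl
      have hss : Real.sqrt z * Real.sqrt z = z := Real.mul_self_sqrt hz0.le
      have hx : sa * Real.sqrt z * (sb / Real.sqrt z) = sa * sb := by
        rw [mul_assoc, ← mul_div_assoc, mul_comm (Real.sqrt z) sb, mul_div_assoc,
          div_self hsz.ne', mul_one]
      rw [e1, sub_sq, mul_pow, div_pow, hsq, ha2, hb2]
      linear_combination (-2) * hx
    rw [habs, hfsq, smul_eq_mul,
      show -(α * z + β / z - 2 * (sa * sb)) = 2 * (sa * sb) + (-(α * z) - β / z) by ring,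
      Real.exp_add]
    ring
  have hInt : IntegrableOn (fun z => |f' z| • Real.exp (-(f z) ^ 2)) (Ioi 0) := by
    have hiff := integrableOn_image_iff_integrableOn_abs_deriv_smul measurableSet_Ioi
      (fun z hz => (hderiv z hz).hasDerivWithinAt) hmono.injOn (fun u => Real.exp (-u ^ 2))
    rw [himg] at hiff
    exact hiff.mp (by rw [integrableOn_univ]; simpa using integrable_exp_neg_mul_sq one_pos)
  have hK : IntegrableOn (fun z => Real.exp (2 * (sa * sb)) *
      ((sa / (2 * Real.sqrt z)) * Real.exp (-(α * z) - β / z)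
        + (sb / (2 * (z * Real.sqrt z))) * Real.exp (-(α * z) - β / z))) (Ioi 0) :=
    hInt.congr_fun hpt measurableSet_Ioi
  have hAB : IntegrableOn (fun z => (sa / (2 * Real.sqrt z)) * Real.exp (-(α * z) - β / z)
      + (sb / (2 * (z * Real.sqrt z))) * Real.exp (-(α * z) - β / z)) (Ioi 0) := by
    have h : IntegrableOn (fun z => (Real.exp (2 * (sa * sb)))⁻¹ * (Real.exp (2 * (sa * sb)) *
        ((sa / (2 * Real.sqrt z)) * Real.exp (-(α * z) - β / z)
          + (sb / (2 * (z * Real.sqrt z))) * Real.exp (-(α * z) - β / z)))) (Ioi 0) :=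
      hK.const_mul _
    refine h.congr_fun (fun z hz => ?_) measurableSet_Ioi
    dsimp only
    rw [← mul_assoc, inv_mul_cancel₀ (Real.exp_ne_zero _), one_mul]
  have hcontexp : ContinuousOn (fun z : ℝ => Real.exp (-(α * z) - β / z)) (Ioi 0) := by
    apply Real.continuous_exp.comp_continuousOn
    exact (continuousOn_const.mul continuousOn_id).neg.sub
      (continuousOn_const.div continuousOn_id fun z hz => (mem_Ioi.mp hz).ne')
  have hcsqrt : ContinuousOn (fun z : ℝ => Real.sqrt z) (Ioi 0) :=
    Real.continuous_sqrt.continuousOn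
  have hA : IntegrableOn (fun z => (sa / (2 * Real.sqrt z)) * Real.exp (-(α * z) - β / z)) (Ioi 0) := by
    refine hAB.mono' ?_ ?_
    · refine ContinuousOn.aestronglyMeasurable ?_ measurableSet_Ioi
      refine (continuousOn_const.div (continuousOn_const.mul hcsqrt)
        fun z hz => ?_).mul hcontexp
      have hsz : 0 < Real.sqrt z := Real.sqrt_pos.mpr hz
      exact mul_ne_zero two_ne_zero hsz.ne'
    · filter_upwards [ae_restrict_mem measurableSet_Ioi] with z hz
      have hz0 : (0:ℝ) < z := hz
      have hsz : 0 < Real.sqrt z := Real.sqrt_pos.mpr hz0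
      rw [Real.norm_eq_abs, abs_of_nonneg (by positivity)]
      have : 0 ≤ (sb / (2 * (z * Real.sqrt z))) * Real.exp (-(α * z) - β / z) := by positivity
      linarith
  have hB : IntegrableOn (fun z => (sb / (2 * (z * Real.sqrt z))) * Real.exp (-(α * z) - β / z)) (Ioi 0) := by
    refine hAB.mono' ?_ ?_
    · refine ContinuousOn.aestronglyMeasurable ?_ measurableSet_Ioi
      refine (continuousOn_const.div (continuousOn_const.mul (continuousOn_id.mul hcsqrt))
        fun z hz => ?_).mul hcontexp
      have hz0 : (0:ℝ) < z := hz
      have hsz : 0 < Real.sqrt z := Real.sqrt_pos.mpr hz0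
      exact mul_ne_zero two_ne_zero (mul_ne_zero hz0.ne' hsz.ne')
    · filter_upwards [ae_restrict_mem measurableSet_Ioi] with z hz
      have hz0 : (0:ℝ) < z := hz
      have hsz : 0 < Real.sqrt z := Real.sqrt_pos.mpr hz0
      rw [Real.norm_eq_abs, abs_of_nonneg (by positivity)]
      have : 0 ≤ (sa / (2 * Real.sqrt z)) * Real.exp (-(α * z) - β / z) := by positivity
      linarith
  have main : Real.sqrt Real.pi = Real.exp (2 * (sa * sb)) *
      ((∫ z in Ioi (0:ℝ), (sa / (2 * Real.sqrt z)) * Real.exp (-(α * z) - β / z))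
        + ∫ z in Ioi (0:ℝ), (sb / (2 * (z * Real.sqrt z))) * Real.exp (-(α * z) - β / z)) := by
    rw [← hgauss, base, setIntegral_congr_fun measurableSet_Ioi hpt, integral_const_mul,
      integral_add hA hB]
  -- pull out constants
  have eA : ∫ z in Ioi (0:ℝ), (sa / (2 * Real.sqrt z)) * Real.exp (-(α * z) - β / z)
      = (sa / 2) * ∫ z in Ioi (0:ℝ), (1 / Real.sqrt z) * Real.exp (-(α * z) - β / z) := by
    rw [← integral_const_mul]
    refine setIntegral_congr_fun measurableSet_Ioi fun z hz => ?_
    have hsz : 0 < Real.sqrt z := Real.sqrt_pos.mpr hz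
    field_simp
  have eB : ∫ z in Ioi (0:ℝ), (sb / (2 * (z * Real.sqrt z))) * Real.exp (-(α * z) - β / z)
      = (sb / 2) * ∫ z in Ioi (0:ℝ), (1 / (z * Real.sqrt z)) * Real.exp (-(α * z) - β / z) := by
    rw [← integral_const_mul]
    refine setIntegral_congr_fun measurableSet_Ioi fun z hz => ?_
    have hz0 : (0:ℝ) < z := hz
    have hsz : 0 < Real.sqrt z := Real.sqrt_pos.mpr hz0
    field_simp
  -- symmetry substitution z ↦ (β/α)/z
  have hsub : ∫ z in Ioi (0:ℝ), (1 / Real.sqrt z) * Real.exp (-(α * z) - β / z)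
      = (sb / sa) * ∫ z in Ioi (0:ℝ), (1 / (z * Real.sqrt z)) * Real.exp (-(α * z) - β / z) := by
    set c := β / α with hcdef
    have hc : 0 < c := div_pos hβ hα
    set g : ℝ → ℝ := fun z => c / z with hgdef
    have hgderiv : ∀ z ∈ Ioi (0:ℝ), HasDerivAt g (-(c / z ^ 2)) z := by
      intro z hz
      have hz0 : (0:ℝ) < z := hz
      have h1 : HasDerivAt (fun w : ℝ => c * w⁻¹) (c * -(z ^ 2)⁻¹) z :=
        (hasDerivAt_inv hz0.ne').const_mul c
      have hfeq : g = fun w : ℝ => c * w⁻¹ := by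
        funext w; simp only [hgdef, div_eq_mul_inv]
      have heq : c * -(z ^ 2)⁻¹ = -(c / z ^ 2) := by field_simp
      rw [hgdef] at hfeq ⊢
      rw [hfeq, ← heq]
      exact h1
    have hginj : InjOn g (Ioi 0) := by
      intro x hx y hy hxy
      have hx0 : (0:ℝ) < x := hx
      have hy0 : (0:ℝ) < y := hy
      have : c / x = c / y := hxy
      rw [div_eq_div_iff hx0.ne' hy0.ne'] at this
      exact mul_left_cancel₀ hc.ne' (by linarith)
    have hgimg : g '' Ioi 0 = Ioi 0 := by
      ext x
      constructor
      · rintro ⟨y, hy, rfl⟩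
        exact mem_Ioi.mpr (div_pos hc hy)
      · intro hx
        have hx0 : (0:ℝ) < x := hx
        refine ⟨c / x, mem_Ioi.mpr (div_pos hc hx0), ?_⟩
        show c / (c / x) = x
        field_simp
    have subst := integral_image_eq_integral_abs_deriv_smul measurableSet_Ioi
      (fun z hz => (hgderiv z hz).hasDerivWithinAt) hginj
      (fun u => (1 / Real.sqrt u) * Real.exp (-(α * u) - β / u))
    rw [hgimg] at subst
    rw [subst, ← integral_const_mul]
    refine setIntegral_congr_fun measurableSet_Ioi fun z hz => ?_
    have hz0 : (0:ℝ) < z := hz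
    have hsz : 0 < Real.sqrt z := Real.sqrt_pos.mpr hz0
    have hsc : 0 < Real.sqrt c := Real.sqrt_pos.mpr hc
    have habs : |(-(c / z ^ 2))| = c / z ^ 2 := by
      rw [abs_neg, abs_of_pos (by positivity)]
    have hsqc : Real.sqrt (c / z) = Real.sqrt c / Real.sqrt z := Real.sqrt_div hc.le z
    have hgz : g z = c / z := rfl
    have harg : -(α * (c / z)) - β / (c / z) = -(α * z) - β / z := by
      rw [hcdef]
      field_simp
      ring
    rw [smul_eq_mul, habs, hgz, harg, hsqc]
    have hc2 : Real.sqrt c * Real.sqrt c = c := Real.mul_self_sqrt hc.le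
    have hcsab : Real.sqrt c = sb / sa := by
      rw [hcdef, hsadef, hsbdef, Real.sqrt_div hβ.le]
    have hss : Real.sqrt z * Real.sqrt z = z := Real.mul_self_sqrt hz0.le
    have hcoef : c / z ^ 2 * (1 / (Real.sqrt c / Real.sqrt z)) = sb / sa * (1 / (z * Real.sqrt z)) := by
      rw [hcsab] at hc2 ⊢
      have hca : c * α = β := by rw [hcdef]; field_simp
      rw [← hc2]
      have hq : 0 < sb / sa := div_pos hsb hsa
      generalize sb / sa = q at hq ⊢
      field_simp
      linear_combination hss
    rw [← mul_assoc, ← mul_assoc, hcoef]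
  rw [eA, hsub, eB] at main
  have h1 : sa / 2 * (sb / sa * ∫ z in Ioi (0:ℝ), 1 / (z * Real.sqrt z) * Real.exp (-(α * z) - β / z))
      + sb / 2 * ∫ z in Ioi (0:ℝ), 1 / (z * Real.sqrt z) * Real.exp (-(α * z) - β / z)
      = sb * ∫ z in Ioi (0:ℝ), 1 / (z * Real.sqrt z) * Real.exp (-(α * z) - β / z) := by
    generalize (∫ z in Ioi (0:ℝ), 1 / (z * Real.sqrt z) * Real.exp (-(α * z) - β / z)) = I
    rw [← mul_assoc, div_mul_div_comm, mul_comm sa sb, mul_div_mul_right _ _ hsa.ne']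
    ring
  rw [h1] at main
  rw [show Real.sqrt (α * β) = sa * sb from by
      rw [hsadef, hsbdef, ← Real.sqrt_mul hα.le],
    show (-2:ℝ) * (sa * sb) = -(2 * (sa * sb)) by ring, Real.exp_neg]
  have hne : Real.exp (2 * (sa * sb)) ≠ 0 := (Real.exp_pos _).ne'
  rw [main]
  generalize (∫ z in Ioi (0:ℝ), 1 / (z * Real.sqrt z) * Real.exp (-(α * z) - β / z)) = I
  field_simp


/-- Let `μ > 0`, `λ > 0`, `a ≥ 0`, `b ≥ 0`, and define `λ' = λ + 2a` and
`μ' = √(λ'/(λ/μ² + 2b))`. Then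
`∫₀^∞ √(λ/(2πz³))·exp(−λ(z − μ)²/(2μ²z))·exp(−a/z − b·z) dz = √(λ/λ')·exp(λ/μ − λ'/μ')`;
that is, the marginal (pseudo-)likelihood obtained by integrating the kernel
`exp(−a z⁻¹ − b z)` against the inverse-Gaussian(μ, λ) prior has this closed form. -/
theorem stmt_15 (m l a b : ℝ) (hm : 0 < m) (hl : 0 < l) (ha : 0 ≤ a) (hb : 0 ≤ b)
    (l' m' : ℝ) (hl' : l' = l + 2 * a) (hm' : m' = Real.sqrt (l' / (l / m ^ 2 + 2 * b))) :
    ∫ z in Set.Ioi (0 : ℝ),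
        Real.sqrt (l / (2 * Real.pi * z ^ 3))
          * Real.exp (-(l * (z - m) ^ 2) / (2 * m ^ 2 * z))
          * Real.exp (-(a / z) - b * z)
      = Real.sqrt (l / l') * Real.exp (l / m - l' / m') := by
  have hl'pos : 0 < l' := by rw [hl']; linarith
  set α := l / (2 * m ^ 2) + b with hαdef
  set β := l' / 2 with hβdef
  have hα : 0 < α := by
    have h : 0 < l / (2 * m ^ 2) := by positivity
    rw [hαdef]; linarith
  have hβ : 0 < β := by rw [hβdef]; linarith
  have hpt : ∀ z ∈ Ioi (0:ℝ),
      Real.sqrt (l / (2 * Real.pi * z ^ 3))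
        * Real.exp (-(l * (z - m) ^ 2) / (2 * m ^ 2 * z))
        * Real.exp (-(a / z) - b * z)
      = (Real.sqrt (l / (2 * Real.pi)) * Real.exp (l / m))
          * ((1 / (z * Real.sqrt z)) * Real.exp (-(α * z) - β / z)) := by
    intro z hz
    have hz0 : (0:ℝ) < z := hz
    have hsz : 0 < Real.sqrt z := Real.sqrt_pos.mpr hz0
    have h1 : Real.sqrt (l / (2 * Real.pi * z ^ 3))
        = Real.sqrt (l / (2 * Real.pi)) * (1 / (z * Real.sqrt z)) := by
      rw [show l / (2 * Real.pi * z ^ 3) = (l / (2 * Real.pi)) * (1 / z ^ 3) by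
          field_simp,
        Real.sqrt_mul (by positivity), one_div, Real.sqrt_inv, sqrt_cube hz0, one_div]
    have h2 : Real.exp (-(l * (z - m) ^ 2) / (2 * m ^ 2 * z)) * Real.exp (-(a / z) - b * z)
        = Real.exp (l / m) * Real.exp (-(α * z) - β / z) := by
      rw [← Real.exp_add, ← Real.exp_add]
      congr 1
      rw [hαdef, hβdef, hl']
      field_simp
      ring
    rw [h1, mul_assoc, h2]
    ring
  rw [setIntegral_congr_fun measurableSet_Ioi hpt, integral_const_mul, key α β hα hβ]
  have hβ2 : Real.sqrt β * Real.sqrt β = β := Real.mul_self_sqrt hβ.le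
  have hsβ : 0 < Real.sqrt β := Real.sqrt_pos.mpr hβ
  have hsα : 0 < Real.sqrt α := Real.sqrt_pos.mpr hα
  have hsπ : 0 < Real.sqrt Real.pi := Real.sqrt_pos.mpr Real.pi_pos
  have h2β : l' = 2 * β := by rw [hβdef]; ring
  have hs1 : Real.sqrt (l / (2 * Real.pi)) * (Real.sqrt Real.pi / Real.sqrt β)
      = Real.sqrt (l / l') := by
    have hs2 : 0 < Real.sqrt 2 := by positivity
    rw [h2β, Real.sqrt_div hl.le, Real.sqrt_div hl.le,
      Real.sqrt_mul (by norm_num : (0:ℝ) ≤ 2), Real.sqrt_mul (by norm_num : (0:ℝ) ≤ 2)]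
    field_simp
  have hs2' : 2 * Real.sqrt (α * β) = l' / m' := by
    rw [hm']
    have harg : l' / (l / m ^ 2 + 2 * b) = β / α := by
      rw [hβdef, hαdef]
      rw [show l / m ^ 2 + 2 * b = 2 * (l / (2 * m ^ 2) + b) by field_simp]
      rw [mul_comm, ← div_div, div_right_comm]
    rw [harg, Real.sqrt_div hβ.le, Real.sqrt_mul hα.le, h2β, div_div_eq_mul_div,
      eq_div_iff hsβ.ne']
    linear_combination (2 * Real.sqrt α) * hβ2
  rw [show l / m - l' / m' = l / m + -2 * Real.sqrt (α * β) by rw [← hs2']; ring,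
    Real.exp_add, ← hs1]
  ring
end
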